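/- Let x ∈ H = {x ∈ ℝ² : x₁ < 0}. Then Boggio's biharmonic Green function of the half-plane extends continuously and positively to the diagonal at x: G_H(x,y) → x₁²/(4π) > 0 as y → x with y ∈ H, y ≠ x. -/

import Mathlib

open MeasureTheory Real Filter Topology

noncomputable section

/-- ℝ² with the Euclidean norm. -/
abbrev E2 : Type := EuclideanSpace ℝ (Fin 2)

/-- The open half-plane `H = {x ∈ ℝ² : x₁ < 0}`. -/
def Hset : Set E2 := {x : E2 | x 0 < 0}

/-- Reflection `x* = (−x₁, x₂)` across `∂H`. -/
def refl2 (x : E2) : E2 := WithLp.toLp 2 (fun i : Fin 2 => if i = 0 then -(x 0) else x i)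

/-- The boundary point `(0, t) ∈ ∂H`. -/
def bd (t : ℝ) : E2 := WithLp.toLp 2 (fun i : Fin 2 => if i = 0 then (0 : ℝ) else t)

/-- The Laplace operator `Δf = ∑ᵢ ∂²f/∂xᵢ²`. -/
def lap (f : E2 → ℝ) (x : E2) : ℝ :=
  ∑ i, iteratedFDeriv ℝ 2 f x ![EuclideanSpace.single i 1, EuclideanSpace.single i 1]

/-- The partial derivative `∂₁ f` with respect to the first coordinate. -/
def pd1 (f : E2 → ℝ) (x : E2) : ℝ := fderiv ℝ f x (EuclideanSpace.single 0 1)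

/-- Boggio's biharmonic Green function of the half-plane `H ⊆ ℝ²`. -/
def boggio2 (x y : E2) : ℝ :=
  (1 / (8 * π)) * dist x y ^ 2 *
    ∫ v in (1:ℝ)..(dist (refl2 x) y / dist x y), (v ^ 2 - 1) / v


lemma integral_aux {R : ℝ} (hR : 0 < R) :
    ∫ v in (1:ℝ)..R, (v ^ 2 - 1) / v = (R ^ 2 - 1) / 2 - Real.log R := by
  have h0 : (0 : ℝ) ∉ Set.uIcc 1 R := Set.notMem_uIcc_of_lt one_pos hR
  have hcongr : ∀ v ∈ Set.uIcc (1:ℝ) R, (v ^ 2 - 1) / v = v - 1 / v := by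
    intro v hv
    have hv0 : v ≠ 0 := fun h => h0 (h ▸ hv)
    field_simp
  rw [intervalIntegral.integral_congr hcongr,
    intervalIntegral.integral_sub intervalIntegral.intervalIntegrable_id
      (intervalIntegral.intervalIntegrable_one_div (fun v hv => fun h => h0 (h ▸ hv))
        continuousOn_id),
    integral_id, integral_one_div h0, div_one, one_pow]


/-- Boggio's Green function of the half-plane extends continuously and
positively to the diagonal: `G_H(x,y) → x₁²/(4π) > 0` as `y → x`, `y ∈ H`, `y ≠ x`. -/
theorem boggio2_diagonal_limit (x : E2) (hx : x 0 < 0) :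
    Filter.Tendsto (fun y => boggio2 x y) (nhdsWithin x (Hset \ {x}))
        (nhds ((x 0) ^ 2 / (4 * π)))
      ∧ (x 0) ^ 2 / (4 * π) > 0 := by
  have hx0 : x 0 ≠ 0 := ne_of_lt hx
  have hpi : (0:ℝ) < π := Real.pi_pos
  constructor
  · set c : ℝ := -2 * x 0 with hcdef
    have hcpos : 0 < c := by simp [hcdef]; linarith
    have hr0 : refl2 x 0 = -(x 0) := by simp [refl2]
    have hr1 : refl2 x 1 = x 1 := by norm_num [refl2]
    have hc : dist (refl2 x) x = c := by
      rw [EuclideanSpace.dist_eq, Fin.sum_univ_two, hr0, hr1, dist_self, Real.dist_eq,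
        show -(x 0) - x 0 = -2 * x 0 from by ring, abs_of_pos (by linarith)]
      rw [show (-2 * x 0) ^ 2 + 0 ^ 2 = c ^ 2 from by
        rw [hcdef]; ring]
      exact Real.sqrt_sq hcpos.le
    set l := nhdsWithin x (Hset \ {x}) with hldef
    -- dist to the reflected point tends to c
    have hA : Tendsto (fun y : E2 => dist (refl2 x) y) l (𝓝 c) := by
      have h1 : Tendsto (fun y : E2 => dist (refl2 x) y) (𝓝 x) (𝓝 (dist (refl2 x) x)) :=
        (continuous_const.dist continuous_id).tendsto x
      rw [hc] at h1
      exact h1.mono_left nhdsWithin_le_nhds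
    -- dist to x tends to 0 within Ioi 0
    have hD0 : Tendsto (fun y : E2 => dist x y) l (𝓝 0) := by
      have h1 : Tendsto (fun y : E2 => dist x y) (𝓝 x) (𝓝 (dist x x)) :=
        (continuous_const.dist continuous_id).tendsto x
      rw [dist_self] at h1
      exact h1.mono_left nhdsWithin_le_nhds
    have hDev : ∀ᶠ y in l, 0 < dist x y := by
      filter_upwards [self_mem_nhdsWithin] with y hy
      exact dist_pos.mpr (fun h => hy.2 (by simp [h.symm]))
    have hD : Tendsto (fun y : E2 => dist x y) l (𝓝[>] 0) :=
      tendsto_nhdsWithin_iff.mpr ⟨hD0, hDev⟩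
    have hAev : ∀ᶠ y in l, 0 < dist (refl2 x) y := hA.eventually (eventually_gt_nhds hcpos)
    -- eventual explicit formula
    have heq : ∀ᶠ y in l, boggio2 x y =
        (1 / (8 * π)) * ((dist (refl2 x) y) ^ 2 / 2 - (dist x y) ^ 2 / 2
          - (dist x y) ^ 2 * Real.log (dist (refl2 x) y)
          + (dist x y) ^ 2 * Real.log (dist x y)) := by
      filter_upwards [hDev, hAev] with y hd hds
      have hRpos : 0 < dist (refl2 x) y / dist x y := div_pos hds hd
      rw [boggio2, integral_aux hRpos, Real.log_div hds.ne' hd.ne']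
      field_simp
      ring
    -- t^2 * log t → 0
    have hsq : Tendsto (fun t : ℝ => t ^ 2 * Real.log t) (𝓝[>] 0) (𝓝 0) := by
      have h := tendsto_log_mul_rpow_nhdsGT_zero (r := 2) (by norm_num)
      apply h.congr'
      filter_upwards [self_mem_nhdsWithin] with t _
      rw [show (2:ℝ) = ((2:ℕ):ℝ) from by norm_num, Real.rpow_natCast]
      ring
    have t1 : Tendsto (fun y : E2 => (dist (refl2 x) y) ^ 2 / 2) l (𝓝 (c ^ 2 / 2)) :=
      (hA.pow 2).div_const 2
    have t2 : Tendsto (fun y : E2 => (dist x y) ^ 2 / 2) l (𝓝 0) := by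
      simpa using (hD0.pow 2).div_const 2
    have t3 : Tendsto (fun y : E2 => (dist x y) ^ 2 * Real.log (dist (refl2 x) y)) l (𝓝 0) := by
      have hlog : Tendsto (fun y : E2 => Real.log (dist (refl2 x) y)) l (𝓝 (Real.log c)) :=
        ((Real.continuousAt_log hcpos.ne').tendsto).comp hA
      simpa using (hD0.pow 2).mul hlog
    have t4 : Tendsto (fun y : E2 => (dist x y) ^ 2 * Real.log (dist x y)) l (𝓝 0) :=
      hsq.comp hD
    have tall : Tendsto (fun y : E2 =>
        (1 / (8 * π)) * ((dist (refl2 x) y) ^ 2 / 2 - (dist x y) ^ 2 / 2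
          - (dist x y) ^ 2 * Real.log (dist (refl2 x) y)
          + (dist x y) ^ 2 * Real.log (dist x y))) l
        (𝓝 ((1 / (8 * π)) * (c ^ 2 / 2 - 0 - 0 + 0))) :=
      (((t1.sub t2).sub t3).add t4).const_mul _
    have hval : (1 / (8 * π)) * (c ^ 2 / 2 - 0 - 0 + 0) = (x 0) ^ 2 / (4 * π) := by
      rw [hcdef]
      field_simp
      ring
    rw [← hval]
    exact Tendsto.congr' (heq.mono fun _ h => h.symm) tall
  · have h1 : 0 < (x 0) ^ 2 := by positivity
    have h2 : 0 < 4 * π := by linarith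
    exact div_pos h1 h2


end
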